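/- Let H be an infinite-dimensional complex Hilbert space, f : G_∞(H) → G_∞(H) a map sending every pair of subspaces to an equivalent pair, and L the associated linear or conjugate-linear isometry with f(X) = L(X) ⊕ O(X) as in the structure theorem. Then for X ∈ G_∞(H), the image f(G^1(X)) consists exactly of those closed hyperplanes of f(X) that contain O(X); consequently f(G^1(X)) = G^1(f(X)) if and only if O(X) = 0. -/

import Mathlib

variable {H : Type} [NormedAddCommGroup H] [InnerProductSpace ℂ H] [CompleteSpace H]

/-- Membership in the Grassmannian `G_∞(H)`. -/
def inGinf (X : Submodule ℂ H) : Prop :=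
  IsClosed (X : Set H) ∧ ¬ FiniteDimensional ℂ X ∧ ¬ FiniteDimensional ℂ Xᗮ

/-- `f` sends every pair of subspaces of `G_∞(H)` to an equivalent pair. -/
def SendsPairsToEquiv (f : Submodule ℂ H → Submodule ℂ H) : Prop :=
  ∀ X Y : Submodule ℂ H, inGinf X → inGinf Y →
    ∃ L : H →ₗᵢ[ℂ] H,
      ({f X, f Y} : Set (Submodule ℂ H)) = {X.map L.toLinearMap, Y.map L.toLinearMap}

/-- `L : H → H` is a linear or conjugate-linear isometry. -/
def IsLinOrConjIsometry (L : H → H) : Prop :=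
  (∃ T : H →ₗᵢ[ℂ] H, ∀ x, L x = T x) ∨
  (∃ T : H →ₛₗᵢ[starRingEnd ℂ] H, ∀ x, L x = T x)

/-- `L` and `O` decompose `f` as in the structure theorem. -/
def Decomposes (f : Submodule ℂ H → Submodule ℂ H) (L : H → H)
    (O : Submodule ℂ H → Submodule ℂ H) : Prop :=
  ∀ X : Submodule ℂ H, inGinf X →
    IsClosed ((O X : Set H)) ∧
    (∀ y ∈ O X, ∀ x : H, inner ℂ (L x) y = (0 : ℂ)) ∧
    f X = Submodule.span ℂ (L '' X) ⊔ O X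

/-- The set `G^1(X)` of closed hyperplanes of `X`. -/
def hyperplanesOf (X : Submodule ℂ H) : Set (Submodule ℂ H) :=
  {A | A ≤ X ∧ IsClosed (A : Set H) ∧ Module.finrank ℂ (Aᗮ ⊓ X : Submodule ℂ H) = 1}

section Helpers

open Submodule Module

/-- An alternative characterization of being a closed hyperplane. -/
def isHyp (A X : Submodule ℂ H) : Prop :=
  A ≤ X ∧ IsClosed (A : Set H) ∧ ∃ v ∈ X, v ∉ A ∧ A ⊔ span ℂ {v} = X

lemma inf_span_singleton_eq_bot {A : Submodule ℂ H} {v : H} (hv : v ∉ A) :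
    A ⊓ span ℂ {v} = ⊥ := by
  rw [eq_bot_iff]
  rintro x ⟨hxA, hxs⟩
  rcases mem_span_singleton.mp hxs with ⟨c, rfl⟩
  rcases eq_or_ne c 0 with rfl | hc
  · simp
  · exact absurd (by simpa [inv_smul_smul₀ hc] using A.smul_mem c⁻¹ hxA) hv

lemma eq_bot_or_eq_span {p : Submodule ℂ H} {w : H} (h : p ≤ span ℂ {w}) :
    p = ⊥ ∨ p = span ℂ {w} := by
  by_cases hp : p = ⊥
  · exact Or.inl hp
  · right
    obtain ⟨u, hu, hune⟩ := p.ne_bot_iff.mp hp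
    rcases mem_span_singleton.mp (h hu) with ⟨c, rfl⟩
    have hc : c ≠ 0 := fun h0 => hune (by simp [h0])
    refine le_antisymm h (span_le.mpr ?_)
    intro z hz
    rcases Set.mem_singleton_iff.mp hz with rfl
    simpa [inv_smul_smul₀ hc] using p.smul_mem c⁻¹ hu

lemma sup_span_eq_of_not_mem {B Y : Submodule ℂ H} {w u : H}
    (hw : B ⊔ span ℂ {w} = Y) (huY : u ∈ Y) (huB : u ∉ B) :
    B ⊔ span ℂ {u} = Y := by
  set N := B ⊔ span ℂ {u} with hN
  have hBY : B ≤ Y := hw ▸ le_sup_left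
  have hNY : N ≤ Y := sup_le hBY (span_le.mpr (by simpa using huY))
  have hmod : (B ⊔ span ℂ {w}) ⊓ N = B ⊔ (span ℂ {w} ⊓ N) :=
    sup_inf_assoc_of_le _ le_sup_left
  rw [hw, inf_eq_right.mpr hNY] at hmod
  rcases eq_bot_or_eq_span (inf_le_left : span ℂ {w} ⊓ N ≤ span ℂ {w}) with h0 | h1
  · rw [h0, sup_bot_eq] at hmod
    exact absurd (hmod ▸ (le_sup_right (a := B) (mem_span_singleton_self u))) huB
  · have hwN : span ℂ {w} ≤ N := h1 ▸ inf_le_right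
    refine le_antisymm hNY ?_
    rw [← hw]
    exact sup_le le_sup_left hwN

lemma sup_orthoCompl_inf {A X : Submodule ℂ H} (hA : IsClosed (A : Set H)) (hAX : A ≤ X) :
    A ⊔ (Aᗮ ⊓ X) = X := by
  refine le_antisymm (sup_le hAX inf_le_right) ?_
  intro x hx
  haveI : CompleteSpace A := hA.completeSpace_coe
  have h1 : (orthogonalProjection A x : H) ∈ A := SetLike.coe_mem _
  have h2 : x - orthogonalProjection A x ∈ Aᗮ := by
    have := sub_starProjection_mem_orthogonal (K := A) x; exact this
  have h3 : x - orthogonalProjection A x ∈ X := X.sub_mem hx (hAX h1)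
  exact mem_sup.mpr ⟨_, h1, _, ⟨h2, h3⟩, by abel⟩

lemma isCompl_comap_of {A W X : Submodule ℂ H} (hA : A ≤ X) (hW : W ≤ X)
    (h1 : A ⊓ W = ⊥) (h2 : A ⊔ W = X) :
    IsCompl (A.comap X.subtype) (W.comap X.subtype) := by
  constructor
  · rw [disjoint_iff, eq_bot_iff]
    rintro x ⟨hxA, hxW⟩
    have : (x : H) ∈ A ⊓ W := ⟨hxA, hxW⟩
    rw [h1, mem_bot] at this
    simpa [mem_bot] using Subtype.ext this
  · rw [codisjoint_iff, eq_top_iff]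
    rintro x -
    have hx : (x : H) ∈ A ⊔ W := h2 ▸ x.2
    rcases mem_sup.mp hx with ⟨a, ha, w, hwm, hsum⟩
    refine mem_sup.mpr ⟨⟨a, hA ha⟩, ha, ⟨w, hW hwm⟩, hwm, ?_⟩
    exact Subtype.ext hsum

lemma finrank_compl_eq {A W W' X : Submodule ℂ H} (hA : A ≤ X) (hW : W ≤ X) (hW' : W' ≤ X)
    (h1 : A ⊓ W = ⊥) (h2 : A ⊔ W = X) (h1' : A ⊓ W' = ⊥) (h2' : A ⊔ W' = X) :
    finrank ℂ W = finrank ℂ W' := by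
  have hc := isCompl_comap_of hA hW h1 h2
  have hc' := isCompl_comap_of hA hW' h1' h2'
  have e1 : finrank ℂ W = finrank ℂ (W.comap X.subtype) :=
    (comapSubtypeEquivOfLe hW).finrank_eq.symm
  have e2 : finrank ℂ W' = finrank ℂ (W'.comap X.subtype) :=
    (comapSubtypeEquivOfLe hW').finrank_eq.symm
  have e3 := (quotientEquivOfIsCompl _ _ hc).finrank_eq
  have e4 := (quotientEquivOfIsCompl _ _ hc').finrank_eq
  rw [e1, e2, ← e3, ← e4]

variable {σ : ℂ →+* ℂ} [RingHomSurjective σ]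

/-- `V` is orthogonal to the range of `T`. -/
def OrthT (T : H →ₛₗᵢ[σ] H) (V : Submodule ℂ H) : Prop :=
  ∀ y ∈ V, ∀ x : H, inner ℂ (T x) y = (0 : ℂ)

lemma unique_decomp (T : H →ₛₗᵢ[σ] H) {V V' : Submodule ℂ H}
    (hV : OrthT T V) (hV' : OrthT T V') {x x' o o' : H}
    (ho : o ∈ V) (ho' : o' ∈ V') (h : T x + o = T x' + o') :
    T x = T x' ∧ o = o' := by
  have hz : T x - T x' = o' - o :=
    sub_eq_sub_iff_add_eq_add.mpr (h.trans (add_comm _ _))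
  have h2 : inner ℂ (T x - T x') (o' - o) = (0 : ℂ) := by
    simp [inner_sub_left, inner_sub_right, hV o ho, hV' o' ho']
  rw [← hz] at h2
  have hzero : T x - T x' = 0 := inner_self_eq_zero.mp h2
  have h3 : T x = T x' := sub_eq_zero.mp hzero
  refine ⟨h3, ?_⟩
  have h4 : o' - o = 0 := by rw [← hz, hzero]
  exact (sub_eq_zero.mp h4).symm

lemma le_of_mapT_le (T : H →ₛₗᵢ[σ] H) {V A' X' : Submodule ℂ H} (hV : OrthT T V)
    (h : X'.map T.toLinearMap ≤ A'.map T.toLinearMap ⊔ V) : X' ≤ A' := by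
  intro x hx
  have hTx : T x ∈ A'.map T.toLinearMap ⊔ V := h (mem_map_of_mem hx)
  rcases mem_sup.mp hTx with ⟨t, ht, o, ho, hto⟩
  rcases mem_map.mp ht with ⟨a, ha, rfl⟩
  have heq : T a + o = T x + 0 := by rw [add_zero]; exact hto
  have := (unique_decomp T hV hV ho (zero_mem V) heq).1
  have hax : a = x := T.injective this
  exact hax ▸ ha

lemma mem_of_orth_mem_sup (T : H →ₛₗᵢ[σ] H) {V V' X' : Submodule ℂ H}
    (hV : OrthT T V) (hV' : OrthT T V') {o : H} (ho : o ∈ V')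
    (h : o ∈ X'.map T.toLinearMap ⊔ V) : o ∈ V := by
  rcases mem_sup.mp h with ⟨t, ht, w, hw, htw⟩
  rcases mem_map.mp ht with ⟨x, hx, rfl⟩
  have heq : T x + w = T 0 + o := by rw [map_zero, zero_add]; exact htw
  have := (unique_decomp T hV hV' hw ho heq).2
  exact this ▸ hw

lemma isClosed_mapT (T : H →ₛₗᵢ[σ] H) {A : Submodule ℂ H} (hA : IsClosed (A : Set H)) :
    IsClosed ((A.map T.toLinearMap : Submodule ℂ H) : Set H) := by
  have hcoe : ((A.map T.toLinearMap : Submodule ℂ H) : Set H) = T '' A := Submodule.map_coe _ _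
  rw [hcoe]
  exact (((isComplete_image_iff T.isometry.isUniformInducing).mpr hA.isComplete)).isClosed

lemma pair_cases {a b c d : Submodule ℂ H} (h : ({a, b} : Set (Submodule ℂ H)) = {c, d})
    (hcd : c ≠ d) : (a = c ∧ b = d) ∨ (a = d ∧ b = c) := by
  have ha : a = c ∨ a = d := by
    have : a ∈ ({c, d} : Set (Submodule ℂ H)) := h ▸ Set.mem_insert _ _
    simpa using this
  have hcm : c = a ∨ c = b := by
    have : c ∈ ({a, b} : Set (Submodule ℂ H)) := h.symm ▸ Set.mem_insert _ _
    simpa using this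
  have hdm : d = a ∨ d = b := by
    have : d ∈ ({a, b} : Set (Submodule ℂ H)) := h.symm ▸ (by simp : d ∈ ({c, d} : Set _))
    simpa using this
  rcases ha with rfl | rfl
  · left
    refine ⟨rfl, ?_⟩
    rcases hdm with h' | h'
    · exact absurd h'.symm hcd
    · exact h'.symm
  · right
    refine ⟨rfl, ?_⟩
    rcases hcm with h' | h'
    · exact absurd h' hcd
    · exact h'.symm

lemma hyp_iff {X : Submodule ℂ H} (hXc : IsClosed (X : Set H)) (A : Submodule ℂ H) :
    A ∈ hyperplanesOf X ↔ isHyp A X := by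
  constructor
  · rintro ⟨hAX, hAc, hrank⟩
    refine ⟨hAX, hAc, ?_⟩
    haveI : FiniteDimensional ℂ (Aᗮ ⊓ X : Submodule ℂ H) :=
      FiniteDimensional.of_finrank_pos (by rw [hrank]; norm_num)
    have hDne : (Aᗮ ⊓ X : Submodule ℂ H) ≠ ⊥ := by
      intro hbot
      rw [hbot] at hrank
      simp [finrank_bot] at hrank
    obtain ⟨v, hvD, hvnz⟩ := (Aᗮ ⊓ X : Submodule ℂ H).ne_bot_iff.mp hDne
    have hspan : span ℂ {v} = Aᗮ ⊓ X := by
      refine eq_of_le_of_finrank_eq (span_le.mpr (by simpa using hvD)) ?_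
      rw [finrank_span_singleton hvnz, hrank]
    refine ⟨v, hvD.2, ?_, ?_⟩
    · intro hvA
      exact hvnz (inner_self_eq_zero.mp (hvD.1 v hvA))
    · rw [hspan]
      exact sup_orthoCompl_inf hAc hAX
  · rintro ⟨hAX, hAc, v, hvX, hvA, hsup⟩
    refine ⟨hAX, hAc, ?_⟩
    have hvnz : v ≠ 0 := fun h => hvA (h ▸ A.zero_mem)
    have h1 : A ⊓ (Aᗮ ⊓ X) = ⊥ := by
      rw [eq_bot_iff]
      rintro x ⟨hxA, hxO, -⟩
      simpa [mem_bot] using inner_self_eq_zero.mp (hxO x hxA)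
    have h2 : A ⊔ (Aᗮ ⊓ X) = X := sup_orthoCompl_inf hAc hAX
    have := finrank_compl_eq hAX inf_le_right
      (span_le.mpr (by simpa using hvX)) h1 h2 (inf_span_singleton_eq_bot hvA) hsup
    rw [this, finrank_span_singleton hvnz]

end Helpers

open Submodule Module in
theorem stmt15_aux {σ : ℂ →+* ℂ} [RingHomSurjective σ] (T : H →ₛₗᵢ[σ] H)
    (f : Submodule ℂ H → Submodule ℂ H)
    (hf : ∀ X, inGinf X → inGinf (f X))
    (hpair : SendsPairsToEquiv f)
    (O : Submodule ℂ H → Submodule ℂ H)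
    (hdec : ∀ X : Submodule ℂ H, inGinf X →
      IsClosed ((O X : Set H)) ∧ OrthT T (O X) ∧ f X = X.map T.toLinearMap ⊔ O X)
    (X : Submodule ℂ H) (hX : inGinf X) :
    f '' hyperplanesOf X = {B ∈ hyperplanesOf (f X) | O X ≤ B} ∧
    (f '' hyperplanesOf X = hyperplanesOf (f X) ↔ O X = ⊥) := by
  obtain ⟨hOXc, hOrthX, hfX⟩ := hdec X hX
  have hXc : IsClosed (X : Set H) := hX.1
  have hfXc : IsClosed ((f X : Submodule ℂ H) : Set H) := (hf X hX).1
  have hOXle : O X ≤ f X := hfX ▸ le_sup_right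
  -- hyperplanes of X are in G_∞
  have hginf : ∀ A : Submodule ℂ H, isHyp A X → inGinf A := by
    rintro A ⟨hAX, hAc, v, hvX, hvA, hsup⟩
    refine ⟨hAc, ?_, ?_⟩
    · intro hfin
      haveI := hfin
      have : FiniteDimensional ℂ (A ⊔ span ℂ {v} : Submodule ℂ H) := inferInstance
      exact hX.2.1 (hsup ▸ this)
    · intro hfin
      haveI := hfin
      exact hX.2.2 (Submodule.finiteDimensional_of_le (Submodule.orthogonal_le hAX))
  -- the key forward step
  have stepA : ∀ A : Submodule ℂ H, isHyp A X →
      isHyp (f A) (f X) ∧ f A = A.map T.toLinearMap ⊔ O X := by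
    intro A hA
    obtain ⟨hAX, hAc, v, hvX, hvA, hsupAv⟩ := hA
    have hAginf := hginf A ⟨hAX, hAc, v, hvX, hvA, hsupAv⟩
    obtain ⟨hOAc, hOrthA, hfA⟩ := hdec A hAginf
    have hAneX : A ≠ X := fun h => hvA (h ▸ hvX)
    obtain ⟨T', hT'⟩ := hpair X A hX hAginf
    have hmapne : X.map T'.toLinearMap ≠ A.map T'.toLinearMap :=
      fun h => hAneX ((Submodule.map_injective_of_injective T'.injective h)).symm
    rcases pair_cases hT' hmapne with ⟨hfX', hfA'⟩ | ⟨hfX', hfA'⟩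
    · -- good case: f X = T' X, f A = T' A
      have hfAle : f A ≤ f X := by
        rw [hfX', hfA']
        exact Submodule.map_mono hAX
      have hw1 : T' v ∈ f X := hfX' ▸ mem_map_of_mem hvX
      have hw2 : T' v ∉ f A := by
        rw [hfA']
        intro hmem
        rcases mem_map.mp hmem with ⟨a, ha, hav⟩
        exact hvA (T'.injective hav ▸ ha)
      have hw3 : f A ⊔ span ℂ {T' v} = f X := by
        rw [hfA', hfX', ← hsupAv, Submodule.map_sup, Submodule.map_span, Set.image_singleton]
        rfl
      have hOAOX : O A ≤ O X := by
        intro o ho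
        have hofX : o ∈ f X := hfAle (hfA ▸ (le_sup_right : O A ≤ _) ho)
        rw [hfX] at hofX
        exact mem_of_orth_mem_sup T hOrthX hOrthA ho hofX
      set M := A.map T.toLinearMap ⊔ O X with hM
      have hfAM : f A ≤ M := hfA ▸ sup_le le_sup_left (hOAOX.trans le_sup_right)
      have hMfX : M ≤ f X := hfX ▸ sup_le ((Submodule.map_mono hAX).trans le_sup_left) le_sup_right
      have hMne : M ≠ f X := by
        intro h
        have hXM : X.map T.toLinearMap ≤ A.map T.toLinearMap ⊔ O X := by
          rw [← hM, h, hfX]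
          exact le_sup_left
        exact hAneX (le_antisymm hAX (le_of_mapT_le T hOrthX hXM))
      have hMeq : f A = M := by
        by_contra hne
        have hnle : ¬ M ≤ f A := fun h => hne (le_antisymm hfAM h)
        obtain ⟨u, huM, huA⟩ := SetLike.not_le_iff_exists.mp hnle
        have hsu : f A ⊔ span ℂ {u} = f X := sup_span_eq_of_not_mem hw3 (hMfX huM) huA
        have : f X ≤ M := hsu ▸ sup_le hfAM (span_le.mpr (by simpa using huM))
        exact hMne (le_antisymm hMfX this)
      exact ⟨⟨hfAle, (hf A hAginf).1, T' v, hw1, hw2, hw3⟩, hMeq⟩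
    · -- swap case: impossible
      exfalso
      have h1 : f X ≤ f A := by
        rw [hfX', hfA']
        exact Submodule.map_mono hAX
      have h2 : X.map T.toLinearMap ≤ A.map T.toLinearMap ⊔ O A := by
        have : X.map T.toLinearMap ≤ f X := hfX ▸ le_sup_left
        exact this.trans (h1.trans hfA.le)
      exact hAneX (le_antisymm hAX (le_of_mapT_le T hOrthA h2))
  -- the main set equality
  have part1 : f '' hyperplanesOf X = {B ∈ hyperplanesOf (f X) | O X ≤ B} := by
    ext B
    constructor
    · rintro ⟨A, hA, rfl⟩
      have hA' := (hyp_iff hXc A).mp hA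
      obtain ⟨hhyp, heq⟩ := stepA A hA'
      exact ⟨(hyp_iff hfXc (f A)).mpr hhyp, heq ▸ le_sup_right⟩
    · rintro ⟨hB, hOB⟩
      obtain ⟨hBle, hBc, w, hwfX, hwB, hwsup⟩ := (hyp_iff hfXc B).mp hB
      set A := X ⊓ B.comap T.toLinearMap with hA
      have hAX : A ≤ X := inf_le_left
      have hAc : IsClosed (A : Set H) := by
        have : (A : Set H) = (X : Set H) ∩ (⇑T ⁻¹' (B : Set H)) := rfl
        rw [this]
        exact hXc.inter (hBc.preimage T.continuous)
      have hTA : A.map T.toLinearMap = X.map T.toLinearMap ⊓ B := by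
        ext t
        constructor
        · rintro ht
          rcases mem_map.mp ht with ⟨x, hx, rfl⟩
          exact ⟨mem_map_of_mem hx.1, hx.2⟩
        · rintro ⟨ht1, ht2⟩
          rcases mem_map.mp ht1 with ⟨x, hx, rfl⟩
          exact mem_map_of_mem ⟨hx, ht2⟩
      have hBdec : B = A.map T.toLinearMap ⊔ O X := by
        refine le_antisymm ?_ (sup_le (hTA ▸ inf_le_right) hOB)
        intro b hb
        have hbfX : b ∈ f X := hBle hb
        rw [hfX] at hbfX
        rcases mem_sup.mp hbfX with ⟨t, ht, o, ho, hto⟩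
        have hoB : o ∈ B := hOB ho
        have htB : t ∈ B := by
          have : t = b - o := by rw [← hto]; abel
          rw [this]
          exact B.sub_mem hb hoB
        exact mem_sup.mpr ⟨t, hTA ▸ (⟨ht, htB⟩ : t ∈ _ ⊓ B), o, ho, hto⟩
      have hnotle : ¬ X ≤ B.comap T.toLinearMap := by
        intro hle
        have hTXB : X.map T.toLinearMap ≤ B := Submodule.map_le_iff_le_comap.mpr hle
        have : f X ≤ B := hfX ▸ sup_le hTXB hOB
        exact hwB (this hwfX)
      obtain ⟨v, hvX, hvnA⟩ := SetLike.not_le_iff_exists.mp hnotle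
      have hvA : v ∉ A := fun h => hvnA h.2
      have hTvfX : T v ∈ f X := hfX ▸ (le_sup_left : X.map T.toLinearMap ≤ _) (mem_map_of_mem hvX)
      have hTvB : T v ∉ B := hvnA
      have hBTv : B ⊔ span ℂ {T v} = f X := sup_span_eq_of_not_mem hwsup hTvfX hTvB
      have hsupA : A ⊔ span ℂ {v} = X := by
        refine le_antisymm (sup_le hAX (span_le.mpr (by simpa using hvX))) ?_
        intro x hx
        have hTx : T x ∈ f X := hfX ▸ (le_sup_left : X.map T.toLinearMap ≤ _) (mem_map_of_mem hx)
        rw [← hBTv] at hTx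
        rcases mem_sup.mp hTx with ⟨b, hbB, s, hs, hbs⟩
        rcases mem_span_singleton.mp hs with ⟨c, rfl⟩
        obtain ⟨d, hd⟩ := RingHomSurjective.is_surjective (σ := σ) c
        have hdv : T (d • v) = c • T v := by rw [map_smulₛₗ, hd]
        have hsub : T (x - d • v) ∈ B := by
          have : T (x - d • v) = b := by
            rw [map_sub, hdv, ← hbs]
            abel
          rw [this]
          exact hbB
        have hsubA : x - d • v ∈ A :=
          ⟨X.sub_mem hx (X.smul_mem d hvX), hsub⟩
        have : x = (x - d • v) + d • v := by abel
        rw [this]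
        exact mem_sup.mpr ⟨_, hsubA, _, mem_span_singleton.mpr ⟨d, rfl⟩, rfl⟩
      have hAhyp : isHyp A X := ⟨hAX, hAc, v, hvX, hvA, hsupA⟩
      refine ⟨A, (hyp_iff hXc A).mpr hAhyp, ?_⟩
      rw [(stepA A hAhyp).2, ← hBdec]
  refine ⟨part1, ?_, ?_⟩
  · intro heq
    by_contra hOne
    obtain ⟨o, ho, honz⟩ := (O X).ne_bot_iff.mp hOne
    have hofX : o ∈ f X := hOXle ho
    set B₀ := (span ℂ {o})ᗮ ⊓ f X with hB₀
    have hB₀c : IsClosed ((B₀ : Submodule ℂ H) : Set H) :=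
      (Submodule.isClosed_orthogonal _).inter hfXc
    have hspanle : span ℂ {o} ≤ f X := span_le.mpr (by simpa using hofX)
    have honB : o ∉ B₀ := by
      rintro ⟨h1, -⟩
      exact honz (inner_self_eq_zero.mp (h1 o (mem_span_singleton_self o)))
    have hsupB : B₀ ⊔ span ℂ {o} = f X := by
      rw [sup_comm]
      exact sup_orthoCompl_inf (span ℂ {o}).closed_of_finiteDimensional hspanle
    have hB₀hyp : B₀ ∈ hyperplanesOf (f X) :=
      (hyp_iff hfXc B₀).mpr ⟨inf_le_right, hB₀c, o, hofX, honB, hsupB⟩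
    rw [← heq, part1] at hB₀hyp
    exact honB (hB₀hyp.2 ho)
  · intro h
    rw [part1, h]
    ext B
    simp

/-- with `f X = L(X) ⊕ O(X)` as in the structure theorem,
`f(G^1(X))` is exactly the set of closed hyperplanes of `f X` containing `O X`;
consequently `f(G^1(X)) = G^1(f X)` if and only if `O X = ⊥`. -/
theorem stmt15 (hH : ¬ FiniteDimensional ℂ H)
    (f : Submodule ℂ H → Submodule ℂ H)
    (hf : ∀ X, inGinf X → inGinf (f X))
    (hpair : SendsPairsToEquiv f)
    (L : H → H) (hL : IsLinOrConjIsometry L)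
    (O : Submodule ℂ H → Submodule ℂ H) (hdec : Decomposes f L O)
    (X : Submodule ℂ H) (hX : inGinf X) :
    f '' hyperplanesOf X = {B ∈ hyperplanesOf (f X) | O X ≤ B} ∧
    (f '' hyperplanesOf X = hyperplanesOf (f X) ↔ O X = ⊥) := by
  rcases hL with ⟨T, hT⟩ | ⟨T, hT⟩
  · have hLT : L = ⇑T := funext hT
    refine stmt15_aux T f hf hpair O (fun Y hY => ?_) X hX
    obtain ⟨h1, h2, h3⟩ := hdec Y hY
    refine ⟨h1, fun y hy x => by rw [← hT x]; exact h2 y hy x, ?_⟩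
    have himg : Submodule.span ℂ (⇑T '' (Y : Set H)) = Y.map T.toLinearMap := by
      rw [show (⇑T '' (Y : Set H)) = ⇑T.toLinearMap '' (Y : Set H) from rfl,
        ← Submodule.map_span, Submodule.span_eq]
    rw [h3, hLT, himg]
  · haveI : RingHomSurjective (starRingEnd ℂ) :=
      ⟨fun c => ⟨starRingEnd ℂ c, by simp⟩⟩
    have hLT : L = ⇑T := funext hT
    refine stmt15_aux T f hf hpair O (fun Y hY => ?_) X hX
    obtain ⟨h1, h2, h3⟩ := hdec Y hY
    refine ⟨h1, fun y hy x => by rw [← hT x]; exact h2 y hy x, ?_⟩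
    have himg : Submodule.span ℂ (⇑T '' (Y : Set H)) = Y.map T.toLinearMap := by
      rw [show (⇑T '' (Y : Set H)) = ⇑T.toLinearMap '' (Y : Set H) from rfl,
        ← Submodule.map_span, Submodule.span_eq]
    rw [h3, hLT, himg]
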